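/- Let α, β, p, q, k > 0 with kp < 1 and kq > 1, and define T(x0) = ∫₀^{|x0|} (α z^p + β z^q)^{-k} dz for x0 ∈ ℝ. Then sup_{x0 ∈ ℝ} T(x0) = γ(α,β,p,q,k); in particular γ(α,β,p,q,k) is the least upper bound of the settling-time function of the system x' = -(α|x|^p + β|x|^q)^k sign(x). -/

import Mathlib

open MeasureTheory Set Real

lemma settling_realBeta (a b : ℝ) (ha : 0 < a) (hb : 0 < b) :
    ∫ x in Set.Ioo (0:ℝ) 1, x ^ (a-1) * (1-x) ^ (b-1) =
      Real.Gamma a * Real.Gamma b / Real.Gamma (a+b) := by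
  have h1 : Complex.betaIntegral a b =
      ((∫ x in Set.Ioo (0:ℝ) 1, x ^ (a-1) * (1-x) ^ (b-1) : ℝ) : ℂ) := by
    rw [Complex.betaIntegral, intervalIntegral.integral_of_le zero_le_one,
      ← MeasureTheory.integral_Ioc_eq_integral_Ioo]
    calc ∫ x in Ioc (0:ℝ) 1, (x:ℂ) ^ ((a:ℂ)-1) * (1-(x:ℂ)) ^ ((b:ℂ)-1)
        = ∫ x in Ioc (0:ℝ) 1, ((x ^ (a-1) * (1-x) ^ (b-1) : ℝ) : ℂ) := by
          refine setIntegral_congr_fun measurableSet_Ioc fun x hx => ?_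
          have hx0 : (0:ℝ) ≤ x := le_of_lt hx.1
          have hx1 : (0:ℝ) ≤ 1 - x := by linarith [hx.2]
          have e1 : ((a:ℂ)-1) = ((a-1 : ℝ):ℂ) := by push_cast; ring
          have e2 : ((b:ℂ)-1) = ((b-1 : ℝ):ℂ) := by push_cast; ring
          have e3 : (1-(x:ℂ)) = ((1-x : ℝ):ℂ) := by push_cast; ring
          rw [e1, e2, e3, Complex.ofReal_mul, ← Complex.ofReal_cpow hx0,
            ← Complex.ofReal_cpow hx1]
      _ = ((∫ x in Ioc (0:ℝ) 1, x ^ (a-1) * (1-x) ^ (b-1) : ℝ) : ℂ) := integral_ofReal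
  have h2 := Complex.Gamma_mul_Gamma_eq_betaIntegral
    (by simpa using ha : 0 < (a:ℂ).re) (by simpa using hb : 0 < (b:ℂ).re)
  rw [h1] at h2
  have h3 : ((a:ℂ) + b) = ((a+b:ℝ):ℂ) := by push_cast; ring
  rw [h3, Complex.Gamma_ofReal, Complex.Gamma_ofReal, Complex.Gamma_ofReal] at h2
  have hG : Real.Gamma (a+b) ≠ 0 := (Real.Gamma_pos_of_pos (by linarith)).ne'
  have h4 : Real.Gamma a * Real.Gamma b
      = Real.Gamma (a+b) * ∫ x in Set.Ioo (0:ℝ) 1, x ^ (a-1) * (1-x) ^ (b-1) := by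
    exact_mod_cast h2
  field_simp
  linarith [h4]

lemma settling_K_eq (a b : ℝ) (ha : 0 < a) (hb : 0 < b) :
    ∫ x in Set.Ioi (0:ℝ), x ^ (a-1) * (1+x) ^ (-(a+b)) =
      Real.Gamma a * Real.Gamma b / Real.Gamma (a+b) := by
  have himg : (fun x : ℝ => x / (1 - x)) '' Ioo 0 1 = Ioi 0 := by
    ext y
    constructor
    · rintro ⟨x, hx, rfl⟩
      exact div_pos hx.1 (by linarith [hx.2])
    · intro hy
      have hy0 : (0:ℝ) < y := mem_Ioi.mp hy
      refine ⟨y / (1 + y), ⟨div_pos hy0 (by linarith), ?_⟩, ?_⟩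
      · rw [div_lt_one (by linarith)]; linarith
      · have h1y : (1:ℝ) + y ≠ 0 := by positivity
        field_simp
        ring
  have hderiv : ∀ x ∈ Ioo (0:ℝ) 1, HasDerivWithinAt (fun x : ℝ => x / (1 - x))
      (((1 - x) ^ 2)⁻¹) (Ioo 0 1) x := by
    intro x hx
    have h1x : (1:ℝ) - x ≠ 0 := by have := hx.2; intro h; linarith [h]
    have := (hasDerivAt_id x).div ((hasDerivAt_id x).const_sub 1) h1x
    refine this.hasDerivWithinAt.congr_deriv ?_
    simp only [id]
    field_simp
    ring
  have hinj : InjOn (fun x : ℝ => x / (1 - x)) (Ioo 0 1) := by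
    intro x hx y hy h
    have h1x : (1:ℝ) - x ≠ 0 := by have := hx.2; intro h; linarith [h]
    have h1y : (1:ℝ) - y ≠ 0 := by have := hy.2; intro h; linarith [h]
    field_simp at h
    linarith [h]
  have him := integral_image_eq_integral_abs_deriv_smul measurableSet_Ioo hderiv hinj
    (fun x : ℝ => x ^ (a-1) * (1+x) ^ (-(a+b)))
  rw [himg] at him
  rw [him, ← settling_realBeta a b ha hb]
  refine setIntegral_congr_fun measurableSet_Ioo fun x hx => ?_
  have hx0 : 0 < x := hx.1
  have h1x : 0 < 1 - x := by linarith [hx.2]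
  have key : (1:ℝ) + x / (1 - x) = (1 - x)⁻¹ := by field_simp; ring
  have e1 : |((1 - x) ^ 2)⁻¹| = (1-x) ^ (-2 : ℝ) := by
    rw [abs_of_nonneg (by positivity), rpow_neg h1x.le, rpow_two]
  have e2 : (x / (1-x)) ^ (a-1) = x ^ (a-1) * (1-x) ^ (-(a-1)) := by
    rw [div_rpow hx0.le h1x.le, rpow_neg h1x.le, div_eq_mul_inv]
  have e3 : ((1-x)⁻¹) ^ (-(a+b)) = (1-x) ^ (a+b) := by
    rw [← rpow_neg_one, ← rpow_mul h1x.le]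
    norm_num
  have e4 : (1-x) ^ (-2:ℝ) * ((1-x) ^ (-(a-1)) * (1-x) ^ (a+b)) = (1-x) ^ (b-1) := by
    rw [← rpow_add h1x, ← rpow_add h1x]
    congr 1
    ring
  rw [smul_eq_mul, key, e1, e2, e3, ← e4]
  ring

lemma settling_f_cont (α β p q k : ℝ) (hα : 0 < α) (hβ : 0 < β) :
    ContinuousOn (fun z : ℝ => (α * z ^ p + β * z ^ q) ^ (-k)) (Ioi 0) := by
  intro z hz
  have hz0 : (0:ℝ) < z := hz
  have c1 : ContinuousAt (fun z : ℝ => z ^ p) z :=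
    Real.continuousAt_rpow_const z p (Or.inl hz0.ne')
  have c2 : ContinuousAt (fun z : ℝ => z ^ q) z :=
    Real.continuousAt_rpow_const z q (Or.inl hz0.ne')
  have cb : ContinuousAt (fun z : ℝ => α * z ^ p + β * z ^ q) z :=
    ((continuousAt_const.mul c1).add (continuousAt_const.mul c2))
  have hbpos : 0 < α * z ^ p + β * z ^ q :=
    add_pos (mul_pos hα (rpow_pos_of_pos hz0 p)) (mul_pos hβ (rpow_pos_of_pos hz0 q))
  exact (cb.rpow_const (Or.inl hbpos.ne')).continuousWithinAt

lemma settling_f_integrable (α β p q k : ℝ) (hα : 0 < α) (hβ : 0 < β) (hp : 0 < p) (hq : 0 < q)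
    (hk : 0 < k) (hkp : k * p < 1) (hkq : 1 < k * q) :
    IntegrableOn (fun z : ℝ => (α * z ^ p + β * z ^ q) ^ (-k)) (Ioi 0) := by
  have hcont := settling_f_cont α β p q k hα hβ
  have hIoi : Ioc (0:ℝ) 1 ∪ Ioi 1 = Ioi 0 := Ioc_union_Ioi_eq_Ioi zero_le_one
  rw [← hIoi]
  apply IntegrableOn.union
  · -- on Ioc 0 1, bound by α^(-k) * z^(p * -k)
    have hbnd : IntegrableOn (fun z : ℝ => α ^ (-k) * z ^ (p * -k)) (Ioc 0 1) := by
      have h := intervalIntegral.intervalIntegrable_rpow' (a := 0) (b := 1)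
        (r := p * -k) (by nlinarith)
      rw [intervalIntegrable_iff_integrableOn_Ioc_of_le zero_le_one] at h
      exact h.const_mul _
    refine hbnd.integrable.mono' ?_ ?_
    · exact ((hcont.mono (Ioc_subset_Ioi_self)).aestronglyMeasurable measurableSet_Ioc)
    · rw [ae_restrict_iff' measurableSet_Ioc]
      refine Filter.Eventually.of_forall fun z hz => ?_
      have hz0 : (0:ℝ) < z := hz.1
      have h1 : 0 < α * z ^ p := mul_pos hα (rpow_pos_of_pos hz0 p)
      have h2 : 0 ≤ β * z ^ q := (mul_pos hβ (rpow_pos_of_pos hz0 q)).le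
      rw [Real.norm_eq_abs, abs_of_nonneg (rpow_nonneg (by linarith) _)]
      calc (α * z ^ p + β * z ^ q) ^ (-k) ≤ (α * z ^ p) ^ (-k) :=
            rpow_le_rpow_of_nonpos h1 (by linarith) (by linarith)
        _ = α ^ (-k) * z ^ (p * -k) := by
            rw [mul_rpow hα.le (rpow_nonneg hz0.le p), ← rpow_mul hz0.le]
  · -- on Ioi 1, bound by β^(-k) * z^(q * -k)
    have hbnd : IntegrableOn (fun z : ℝ => β ^ (-k) * z ^ (q * -k)) (Ioi 1) :=
      (integrableOn_Ioi_rpow_of_lt (by nlinarith) zero_lt_one).const_mul _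
    refine hbnd.integrable.mono' ?_ ?_
    · exact ((hcont.mono (t := Ioi 1) fun z hz => lt_trans zero_lt_one hz).aestronglyMeasurable
        measurableSet_Ioi)
    · rw [ae_restrict_iff' measurableSet_Ioi]
      refine Filter.Eventually.of_forall fun z hz => ?_
      have hz0 : (0:ℝ) < z := lt_trans zero_lt_one hz
      have h1 : 0 ≤ α * z ^ p := (mul_pos hα (rpow_pos_of_pos hz0 p)).le
      have h2 : 0 < β * z ^ q := mul_pos hβ (rpow_pos_of_pos hz0 q)
      rw [Real.norm_eq_abs, abs_of_nonneg (rpow_nonneg (by linarith) _)]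
      calc (α * z ^ p + β * z ^ q) ^ (-k) ≤ (β * z ^ q) ^ (-k) :=
            rpow_le_rpow_of_nonpos h2 (by linarith) (by linarith)
        _ = β ^ (-k) * z ^ (q * -k) := by
            rw [mul_rpow hβ.le (rpow_nonneg hz0.le q), ← rpow_mul hz0.le]

lemma settling_I_eq (α β p q k r a b : ℝ) (hα : 0 < α) (hβ : 0 < β) (hk : 0 < k)
    (hr : 0 < r) (hpq : q = p + r) (ha : 0 < a) (hb : 0 < b)
    (hra : r * a = 1 - k * p) (hab : a + b = k) :
    ∫ z in Ioi (0:ℝ), (α * z ^ p + β * z ^ q) ^ (-k)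
      = Real.Gamma a * Real.Gamma b / (α ^ k * Real.Gamma k * r) * (α / β) ^ a := by
  set c : ℝ := α / β with hc_def
  have hc : 0 < c := div_pos hα hβ
  have hrne : r ≠ 0 := hr.ne'
  -- Step 1+2: substitution z = x, u = x^r
  have step1 : ∫ z in Ioi (0:ℝ), (α * z ^ p + β * z ^ q) ^ (-k)
      = ∫ x in Ioi (0:ℝ), (r * x ^ (r-1)) •
          ((1/r) * ((x^r) ^ (a-1) * (α + β * x^r) ^ (-k))) := by
    refine setIntegral_congr_fun measurableSet_Ioi fun x hx => ?_
    have hx0 : (0:ℝ) < x := hx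
    have hC : 0 < α + β * x ^ r := add_pos hα (mul_pos hβ (rpow_pos_of_pos hx0 r))
    have h1 : α * x ^ p + β * x ^ q = x ^ p * (α + β * x ^ r) := by
      rw [hpq, rpow_add hx0]; ring
    rw [smul_eq_mul, h1, mul_rpow (rpow_pos_of_pos hx0 p).le hC.le,
      ← rpow_mul hx0.le, ← rpow_mul hx0.le]
    have hxx : x ^ (r-1) * x ^ (r*(a-1)) = x ^ (p * -k) := by
      rw [← rpow_add hx0]
      congr 1
      nlinarith [hra]
    rw [← hxx]
    field_simp
  have step2 : ∫ x in Ioi (0:ℝ), (r * x ^ (r-1)) •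
        ((1/r) * ((x^r) ^ (a-1) * (α + β * x^r) ^ (-k)))
      = ∫ u in Ioi (0:ℝ), (1/r) * (u ^ (a-1) * (α + β * u) ^ (-k)) :=
    integral_comp_rpow_Ioi_of_pos hr (g := fun u => (1/r) * (u ^ (a-1) * (α + β * u) ^ (-k)))
  -- Step 3: pull out 1/r
  have step3 : ∫ u in Ioi (0:ℝ), (1/r) * (u ^ (a-1) * (α + β * u) ^ (-k))
      = (1/r) * ∫ u in Ioi (0:ℝ), u ^ (a-1) * (α + β * u) ^ (-k) :=
    integral_const_mul _ _
  -- Step 4: scaling u = c * x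
  have step4 : ∫ u in Ioi (0:ℝ), u ^ (a-1) * (α + β * u) ^ (-k)
      = c * ∫ x in Ioi (0:ℝ), (fun u => u ^ (a-1) * (α + β * u) ^ (-k)) (c * x) := by
    have h := integral_comp_mul_left_Ioi (fun u => u ^ (a-1) * (α + β * u) ^ (-k)) 0 hc
    rw [mul_zero] at h
    rw [h, smul_eq_mul, ← mul_assoc, mul_inv_cancel₀ hc.ne', one_mul]
  have step5 : ∫ x in Ioi (0:ℝ), (fun u => u ^ (a-1) * (α + β * u) ^ (-k)) (c * x)
      = c ^ (a-1) * α ^ (-k) * (Real.Gamma a * Real.Gamma b / Real.Gamma k) := by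
    have : ∫ x in Ioi (0:ℝ), (fun u => u ^ (a-1) * (α + β * u) ^ (-k)) (c * x)
        = ∫ x in Ioi (0:ℝ), c ^ (a-1) * α ^ (-k) * (x ^ (a-1) * (1+x) ^ (-(a+b))) := by
      refine setIntegral_congr_fun measurableSet_Ioi fun x hx => ?_
      have hx0 : (0:ℝ) < x := hx
      have h2 : α + β * (c * x) = α * (1 + x) := by
        rw [hc_def]; field_simp
      have h3 : 0 < 1 + x := by linarith
      simp only
      rw [mul_rpow hc.le hx0.le, h2, mul_rpow hα.le h3.le, hab]
      ring
    rw [this, integral_const_mul, settling_K_eq a b ha hb, hab]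
  rw [step1, step2, step3, step4, step5]
  have hca : c * c ^ (a-1) = c ^ a := by
    nth_rewrite 1 [← rpow_one c]
    rw [← rpow_add hc]
    norm_num
  have hαk : α ^ (-k) = (α ^ k)⁻¹ := by rw [rpow_neg hα.le]
  rw [hαk]
  field_simp
  rw [← hca]

/-- With `T(x0) = ∫₀^{|x0|} (α z^p + β z^q)^{-k} dz`, the value
`γ(α,β,p,q,k)` is the least upper bound (supremum) of `T` over all `x0 ∈ ℝ`. -/
theorem settling_time_least_upper_bound
    (α β p q k : ℝ) (hα : 0 < α) (hβ : 0 < β) (hp : 0 < p) (hq : 0 < q) (hk : 0 < k)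
    (hkp : k * p < 1) (hkq : 1 < k * q) :
    IsLUB (Set.range fun x0 : ℝ => ∫ z in (0:ℝ)..|x0|, (α * z ^ p + β * z ^ q) ^ (-k))
      (Real.Gamma ((1 - k * p) / (q - p)) * Real.Gamma ((k * q - 1) / (q - p)) /
        (α ^ k * Real.Gamma k * (q - p)) * (α / β) ^ ((1 - k * p) / (q - p))) := by
  have hpq : p < q := (mul_lt_mul_iff_right₀ hk).mp (lt_trans hkp hkq)
  have hr : (0:ℝ) < q - p := by linarith
  have ha : 0 < (1 - k * p) / (q - p) := div_pos (by linarith) hr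
  have hb : 0 < (k * q - 1) / (q - p) := div_pos (by linarith) hr
  have hInt := settling_f_integrable α β p q k hα hβ hp hq hk hkp hkq
  have hval := settling_I_eq α β p q k (q - p) ((1 - k * p) / (q - p)) ((k * q - 1) / (q - p))
    hα hβ hk hr (by ring) ha hb (by field_simp) (by field_simp; ring)
  constructor
  · rintro _ ⟨x0, rfl⟩
    simp only
    rw [intervalIntegral.integral_of_le (abs_nonneg x0), ← hval]
    refine setIntegral_mono_set hInt ?_ (HasSubset.Subset.eventuallyLE Ioc_subset_Ioi_self)
    have hnn : ∀ᵐ x ∂(volume.restrict (Ioi (0:ℝ))), 0 ≤ (α * x ^ p + β * x ^ q) ^ (-k) := by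
      rw [ae_restrict_iff' measurableSet_Ioi]
      refine Filter.Eventually.of_forall fun z hz => ?_
      have hz0 : (0:ℝ) < z := hz
      exact rpow_nonneg (by positivity) _
    exact hnn
  · intro ub hub
    have htend := intervalIntegral_tendsto_integral_Ioi 0 hInt Filter.tendsto_id
    rw [hval] at htend
    simp only [id_eq] at htend
    refine le_of_tendsto htend (Filter.eventually_atTop.mpr ⟨0, fun i hi => ?_⟩)
    have : ∫ z in (0:ℝ)..i, (α * z ^ p + β * z ^ q) ^ (-k)
        = ∫ z in (0:ℝ)..|i|, (α * z ^ p + β * z ^ q) ^ (-k) := by rw [abs_of_nonneg hi]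
    rw [this]
    exact hub ⟨i, rfl⟩
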